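/- Under the same setup, if α < 1−β and for all k, Σ_{i=1}^k m_i ≤ u_α(k) − u_{1−β}(k), then P(∃k: S_k ≥ u_α(k)) ≤ 1 − β. -/

import Mathlib

open MeasureTheory ProbabilityTheory
open scoped ENNReal NNReal BigOperators

/-- If `S_k = Σ_{i≤k} (m_i + G_i)` with `G_i` i.i.d. standard Gaussians and deterministic
`m_i ≥ 0`, the boundary family `u_γ` satisfies the uniform crossing bound at every level
`γ ∈ (0,1)`, `α < 1 − β`, and `Σ_{i≤k} m_i ≤ u_α(k) − u_{1−β}(k)` for all `k`, then the
crossing probability (power) is at most `1 − β`. -/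
theorem martingale_stouffer_power_necessary {Ω : Type*} [MeasurableSpace Ω]
    (P : Measure Ω) [IsProbabilityMeasure P]
    (m : ℕ → ℝ) (hm : ∀ i, 0 ≤ m i)
    (G : ℕ → Ω → ℝ)
    (hindep : iIndepFun G P)
    (hdist : ∀ i, Measure.map (G i) P = gaussianReal 0 1)
    (u : ℝ → ℕ → ℝ)
    (hu : ∀ γ ∈ Set.Ioo (0:ℝ) 1,
      P {ω | ∃ k ≥ 1, u γ k ≤ ∑ i ∈ Finset.range k, G i ω} ≤ ENNReal.ofReal γ)
    (α β : ℝ) (hα : α ∈ Set.Ioo (0:ℝ) 1) (hβ : β ∈ Set.Ioo (0:ℝ) 1) (hαβ : α < 1 - β)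
    (hbound : ∀ k ≥ 1, ∑ i ∈ Finset.range k, m i ≤ u α k - u (1 - β) k) :
    P {ω | ∃ k ≥ 1, u α k ≤ ∑ i ∈ Finset.range k, (m i + G i ω)}
      ≤ ENNReal.ofReal (1 - β) := by
  have hsub : {ω | ∃ k ≥ 1, u α k ≤ ∑ i ∈ Finset.range k, (m i + G i ω)}
      ⊆ {ω | ∃ k ≥ 1, u (1 - β) k ≤ ∑ i ∈ Finset.range k, G i ω} := by
    intro ω ⟨k, hk, hle⟩
    refine ⟨k, hk, ?_⟩
    have := hbound k hk
    rw [Finset.sum_add_distrib] at hle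
    linarith
  calc P _ ≤ P {ω | ∃ k ≥ 1, u (1 - β) k ≤ ∑ i ∈ Finset.range k, G i ω} :=
        measure_mono hsub
    _ ≤ ENNReal.ofReal (1 - β) :=
        hu (1 - β) ⟨by linarith [hβ.2], by linarith [hβ.1]⟩
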